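/- arXiv:2602.17307 — 5 statements merged into one kernel-verified Lean document; each statement's English description precedes it below -/
import Mathlib

section
/- Let |\psi\rangle be a unit vector in a finite-dimensional complex Hilbert space H and let P_1, ..., P_N be orthogonal projections on H such that \langle\psi| P_i |\psi\rangle \ge 1 - \epsilon_i for each i. Then \|(P_N P_{N-1} \cdots P_1)|\psi\rangle\|^2 \ge 1 - 4 \sum_{i=1}^N \epsilon_i. -/
open scoped InnerProductSpace

open RCLike in
private lemma qub_norm_sub_sq {H : Type*} [NormedAddCommGroup H] [InnerProductSpace ℂ H]
    (x y : H) : ‖x - y‖ ^ 2 = ‖x‖ ^ 2 - 2 * (⟪x, y⟫_ℂ).re + ‖y‖ ^ 2 := by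
  simpa using norm_sub_sq (𝕜 := ℂ) x y

/-- Quantum union bound: sequentially applying projections that each almost fix a unit
state leaves a vector of squared norm at least `1 - 4 ∑ εᵢ`. -/
theorem quantum_union_bound
    {H : Type*} [NormedAddCommGroup H] [InnerProductSpace ℂ H] [FiniteDimensional ℂ H]
    (ψ : H) (hψ : ‖ψ‖ = 1) (N : ℕ) (P : ℕ → H →ₗ[ℂ] H) (ε : ℕ → ℝ)
    (hidem : ∀ i < N, P i ∘ₗ P i = P i)
    (hsa : ∀ i < N, ∀ x y : H, ⟪P i x, y⟫_ℂ = ⟪x, P i y⟫_ℂ)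
    (hε : ∀ i < N, 1 - ε i ≤ (⟪ψ, P i ψ⟫_ℂ).re)
    (v : ℕ → H) (hv0 : v 0 = ψ) (hv : ∀ i, v (i + 1) = P i (v i)) :
    1 - 4 * ∑ i ∈ Finset.range N, ε i ≤ ‖v N‖ ^ 2 := by
  -- key potential bound
  have key : ∀ t, t ≤ N →
      1 - ‖v t‖ ^ 2 + 2 * ‖v t - ψ‖ ^ 2 ≤ 4 * ∑ i ∈ Finset.range t, ε i := by
    intro t
    induction t with
    | zero => intro _; simp [hv0, hψ]
    | succ t ih =>
      intro hle
      have ht : t < N := lt_of_lt_of_le (Nat.lt_succ_self t) hle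
      have IH := ih (le_of_lt ht)
      set Q := P t with hQ
      -- idempotence pointwise
      have hQ2 : ∀ x : H, Q (Q x) = Q x := fun x =>
        DFunLike.congr_fun (hidem t ht) x
      -- real part of ⟪x, Q x⟫ equals ‖Q x‖²
      have hre : ∀ x : H, ‖Q x‖ ^ 2 = (⟪x, Q x⟫_ℂ).re := by
        intro x
        have h1 : ⟪Q x, Q x⟫_ℂ = ⟪x, Q x⟫_ℂ := by
          rw [hsa t ht x (Q x), hQ2]
        have h2 : (⟪Q x, Q x⟫_ℂ).re = ‖Q x‖ ^ 2 := by
          simpa using inner_self_eq_norm_sq (𝕜 := ℂ) (Q x)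
        rw [← h2, h1]
      -- Pythagoras: ‖x - Q x‖² = ‖x‖² - ‖Q x‖²
      have hpyth : ∀ x : H, ‖x - Q x‖ ^ 2 = ‖x‖ ^ 2 - ‖Q x‖ ^ 2 := by
        intro x
        rw [qub_norm_sub_sq, ← hre]
        ring
      set u := v t with hu
      set w := u - ψ with hw
      -- orthogonality: ⟪Q w, ψ - Q ψ⟫ = 0
      have horth : (⟪Q w, ψ - Q ψ⟫_ℂ).re = 0 := by
        have : ⟪Q w, ψ - Q ψ⟫_ℂ = ⟪w, Q (ψ - Q ψ)⟫_ℂ := hsa t ht w (ψ - Q ψ)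
        rw [this]
        have : Q (ψ - Q ψ) = 0 := by
          rw [map_sub, hQ2, sub_self]
        rw [this, inner_zero_right]
        simp
      -- decomposition of v (t+1) - ψ
      have hdec : v (t + 1) - ψ = Q w - (ψ - Q ψ) := by
        rw [hv t, hw, map_sub]
        abel
      have hnorm1 : ‖v (t + 1) - ψ‖ ^ 2 = ‖Q w‖ ^ 2 + ‖ψ - Q ψ‖ ^ 2 := by
        rw [hdec, qub_norm_sub_sq, horth]
        ring
      -- s² ≤ ε t
      have hs : ‖ψ - Q ψ‖ ^ 2 ≤ ε t := by
        have := hε t ht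
        have h := hpyth ψ
        rw [hre ψ] at h
        rw [h, hψ]
        nlinarith [this]
      -- u - Q u = (w - Q w) + (ψ - Q ψ)
      have hsplit : u - Q u = (w - Q w) + (ψ - Q ψ) := by
        rw [hw, map_sub]; abel
      have htri : ‖u - Q u‖ ≤ ‖w - Q w‖ + ‖ψ - Q ψ‖ := by
        rw [hsplit]; exact norm_add_le _ _
      have hQw : ‖Q w‖ ^ 2 = ‖w‖ ^ 2 - ‖w - Q w‖ ^ 2 := by
        have := hpyth w; linarith
      have hQu : ‖Q u‖ ^ 2 = ‖u‖ ^ 2 - ‖u - Q u‖ ^ 2 := by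
        have := hpyth u; linarith
      have hvsucc : v (t + 1) = Q u := hv t
      rw [Finset.sum_range_succ]
      set d := ‖w - Q w‖ with hd
      set s := ‖ψ - Q ψ‖ with hs'
      have hd0 : 0 ≤ d := norm_nonneg _
      have hs0 : 0 ≤ s := norm_nonneg _
      have huQ2 : ‖u - Q u‖ ^ 2 ≤ (d + s) ^ 2 := by
        have h0 : 0 ≤ ‖u - Q u‖ := norm_nonneg _
        nlinarith [htri]
      rw [hvsucc]
      have e1 : 1 - ‖Q u‖ ^ 2 ≤ 1 - ‖u‖ ^ 2 + (d + s) ^ 2 := by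
        rw [hQu]; linarith
      have e2 : ‖Q u - ψ‖ ^ 2 = ‖w‖ ^ 2 - d ^ 2 + s ^ 2 := by
        rw [← hvsucc, hnorm1, hQw]
      rw [e2]
      nlinarith [sq_nonneg (d - s), hs]
  have hN := key N le_rfl
  have := sq_nonneg ‖v N - ψ‖
  linarith
end

section
/- Let m \ge n \ge 1 be integers, let H = (C^{2^l})^{\otimes m} \otimes H_E for a finite-dimensional space H_E, and let W be the span of vectors of the form |+^l\rangle^{\otimes S} \otimes |\phi\rangle where S \subseteq [m] has |S| \ge n and |\phi\rangle is arbitrary on the remaining registers. Let |\psi\rangle \in W \otimes H_E be a unit vector invariant in norm under all permutations of the m registers (i.e., \|A \pi |\psi\rangle\| = \|A|\psi\rangle\| for every operator A on the m registers and every permutation \pi). Then the probability of obtaining outcome 0^l when measuring the first register in the computational basis satisfies \|\langle 0^l|_1 |\psi\rangle\|^2 \ge 2^{-l} n/m - 2^{1-l/2} \sqrt{n(m-n)}/m. -/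
open Finset
namespace SML

def chi : Fin 2 → Fin 2 → ℂ := fun a b => if a = 1 ∧ b = 1 then -1 else 1

lemma chi_symm (a b : Fin 2) : chi a b = chi b a := by
  unfold chi; fin_cases a <;> fin_cases b <;> simp

lemma chi_conj (a b : Fin 2) : (starRingEnd ℂ) (chi a b) = chi a b := by
  unfold chi; split <;> simp

lemma sum_chi_mul (a c : Fin 2) :
    ∑ b : Fin 2, chi a b * chi c b = if a = c then 2 else 0 := by
  fin_cases a <;> fin_cases c <;> simp [chi, Fin.sum_univ_two] <;> norm_num

lemma chi_zero_right (a : Fin 2) : chi a 0 = 1 := by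
  unfold chi; fin_cases a <;> simp

lemma chi_flip (b : Fin 2) : chi 1 (b + 1) = - chi 1 b := by
  have : b = 0 ∨ b = 1 := by omega
  rcases this with h | h <;> subst h
  · rw [show ((0:Fin 2)+1) = 1 from rfl]; norm_num [chi]
  · rw [show ((1:Fin 2)+1) = 0 from rfl]; norm_num [chi]

variable {l : ℕ}

def eps (x y : Fin l → Fin 2) : ℂ := ∏ j, chi (x j) (y j)

lemma eps_symm (x y : Fin l → Fin 2) : eps x y = eps y x := by
  unfold eps; exact Finset.prod_congr rfl fun j _ => chi_symm _ _

lemma eps_conj (x y : Fin l → Fin 2) : (starRingEnd ℂ) (eps x y) = eps x y := by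
  unfold eps; rw [map_prod]; exact Finset.prod_congr rfl fun j _ => chi_conj _ _

lemma sum_eps_mul (x z : Fin l → Fin 2) :
    ∑ y : Fin l → Fin 2, eps x y * eps z y = if x = z then (2:ℂ)^l else 0 := by
  have h1 : ∀ y : Fin l → Fin 2, eps x y * eps z y
      = ∏ j, (chi (x j) (y j) * chi (z j) (y j)) := by
    intro y; rw [Finset.prod_mul_distrib]; rfl
  simp_rw [h1]
  rw [← Fintype.prod_sum (fun j b => chi (x j) b * chi (z j) b)]
  simp_rw [sum_chi_mul]
  by_cases h : x = z
  · subst h; simp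
  · rw [if_neg h]
    obtain ⟨j, hj⟩ := Function.ne_iff.mp h
    exact Finset.prod_eq_zero (Finset.mem_univ j) (by rw [if_neg hj])

lemma eps_zero (x : Fin l → Fin 2) : eps x (fun _ => 0) = 1 := by
  unfold eps; simp [chi_zero_right]

end SML
namespace SML
variable {l m : ℕ}

def Km (x y : Fin m → Fin l → Fin 2) : ℂ := ∏ i, eps (x i) (y i)

lemma Km_symm (x y : Fin m → Fin l → Fin 2) : Km x y = Km y x :=
  Finset.prod_congr rfl fun i _ => eps_symm _ _

lemma Km_conj (x y : Fin m → Fin l → Fin 2) : (starRingEnd ℂ) (Km x y) = Km x y := by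
  unfold Km; rw [map_prod]; exact Finset.prod_congr rfl fun i _ => eps_conj _ _

lemma sum_Km_mul (x z : Fin m → Fin l → Fin 2) :
    ∑ y : Fin m → Fin l → Fin 2, Km x y * Km z y
      = if x = z then ((2:ℂ)^l)^m else 0 := by
  have h1 : ∀ y : Fin m → Fin l → Fin 2, Km x y * Km z y
      = ∏ i, (eps (x i) (y i) * eps (z i) (y i)) := by
    intro y; rw [Finset.prod_mul_distrib]; rfl
  simp_rw [h1]
  rw [← Fintype.prod_sum (fun (i : Fin m) (b : Fin l → Fin 2) => eps (x i) b * eps (z i) b)]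
  simp_rw [sum_eps_mul]
  by_cases h : x = z
  · subst h; simp
  · rw [if_neg h]
    obtain ⟨i, hi⟩ := Function.ne_iff.mp h
    exact Finset.prod_eq_zero (Finset.mem_univ i) (by rw [if_neg hi])

variable {E : Type*} [Fintype E]

/-- the scaling constant -/
noncomputable def cc (l : ℕ) : ℂ := (((Real.sqrt (2 ^ l) : ℝ) : ℂ))⁻¹

lemma cc_conj : (starRingEnd ℂ) (cc l) = cc l := by
  unfold cc; rw [map_inv₀]; norm_num

lemma cc_mul_self : cc l * cc l = ((2:ℂ)^l)⁻¹ := by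
  unfold cc
  rw [← mul_inv, ← Complex.ofReal_mul, Real.mul_self_sqrt (by positivity)]
  push_cast
  ring

lemma cc_sq : cc l * cc l * (2:ℂ)^l = 1 := by
  rw [cc_mul_self, inv_mul_cancel₀ (pow_ne_zero _ two_ne_zero)]

lemma cc_pow_sq : (cc l)^m * (cc l)^m * ((2:ℂ)^l)^m = 1 := by
  rw [← mul_pow, ← mul_pow, cc_sq (l := l), one_pow]

/-- The Hadamard/Fourier transform on all m registers. -/
noncomputable def Fop (l m : ℕ) (E : Type*) [Fintype E] :
    EuclideanSpace ℂ ((Fin m → (Fin l → Fin 2)) × E) →ₗ[ℂ]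
      EuclideanSpace ℂ ((Fin m → (Fin l → Fin 2)) × E) where
  toFun ψ := WithLp.toLp 2 (fun q : (Fin m → (Fin l → Fin 2)) × E =>
    (cc l)^m * ∑ y : Fin m → Fin l → Fin 2, Km q.1 y * ψ (y, q.2))
  map_add' ψ φ := by
    ext q
    simp only [PiLp.add_apply, PiLp.toLp_apply]
    rw [← mul_add, ← Finset.sum_add_distrib]
    congr 1
    exact Finset.sum_congr rfl fun y _ => by rw [mul_add]
  map_smul' c ψ := by
    ext q
    simp only [PiLp.smul_apply, PiLp.toLp_apply, smul_eq_mul, RingHom.id_apply]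
    simp_rw [Finset.mul_sum]
    exact Finset.sum_congr rfl fun y _ => by ring

lemma Fop_apply (ψ : EuclideanSpace ℂ ((Fin m → (Fin l → Fin 2)) × E))
    (x : Fin m → Fin l → Fin 2) (e : E) :
    Fop l m E ψ (x, e) = (cc l)^m * ∑ y : Fin m → Fin l → Fin 2, Km x y * ψ (y, e) := rfl

end SML
namespace SML
variable {l m : ℕ} {E : Type*} [Fintype E]

lemma Fop_conj_apply (ψ : EuclideanSpace ℂ ((Fin m → (Fin l → Fin 2)) × E))
    (x : Fin m → Fin l → Fin 2) (e : E) :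
    (starRingEnd ℂ) (Fop l m E ψ (x, e))
      = (cc l)^m * ∑ y : Fin m → Fin l → Fin 2, Km x y * (starRingEnd ℂ) (ψ (y, e)) := by
  rw [Fop_apply, map_mul, map_pow, cc_conj, map_sum]
  congr 1
  exact Finset.sum_congr rfl fun y _ => by rw [map_mul, Km_conj]

lemma Fop_parseval (ψ φ : EuclideanSpace ℂ ((Fin m → (Fin l → Fin 2)) × E)) :
    ∑ q : (Fin m → (Fin l → Fin 2)) × E,
        (starRingEnd ℂ) (Fop l m E ψ q) * Fop l m E φ q
      = ∑ q : (Fin m → (Fin l → Fin 2)) × E, (starRingEnd ℂ) (ψ q) * φ q := by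
  rw [Fintype.sum_prod_type, Fintype.sum_prod_type]
  rw [Finset.sum_comm, Finset.sum_comm (f := fun x e => (starRingEnd ℂ) (ψ (x, e)) * φ (x, e))]
  refine Finset.sum_congr rfl fun e _ => ?_
  have step1 : ∀ x : Fin m → Fin l → Fin 2,
      (starRingEnd ℂ) (Fop l m E ψ (x, e)) * Fop l m E φ (x, e)
        = ∑ y : Fin m → Fin l → Fin 2, ∑ z : Fin m → Fin l → Fin 2,
            (Km y x * Km z x) * (((cc l)^m * (cc l)^m) *
              ((starRingEnd ℂ) (ψ (y, e)) * φ (z, e))) := by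
    intro x
    rw [Fop_conj_apply, Fop_apply, mul_mul_mul_comm, Finset.sum_mul_sum, Finset.mul_sum]
    refine Finset.sum_congr rfl fun y _ => ?_
    rw [Finset.mul_sum]
    refine Finset.sum_congr rfl fun z _ => ?_
    rw [Km_symm y x, Km_symm z x]; ring
  simp_rw [step1]
  refine Eq.trans Finset.sum_comm ?_
  refine Eq.trans (Finset.sum_congr rfl fun y _ => Finset.sum_comm) ?_
  have step2 : ∀ y z : Fin m → Fin l → Fin 2,
      ∑ x : Fin m → Fin l → Fin 2, (Km y x * Km z x) * (((cc l)^m * (cc l)^m) *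
          ((starRingEnd ℂ) (ψ (y, e)) * φ (z, e)))
        = (if y = z then ((2:ℂ)^l)^m else 0) * (((cc l)^m * (cc l)^m) *
            ((starRingEnd ℂ) (ψ (y, e)) * φ (z, e))) := by
    intro y z
    rw [← Finset.sum_mul, sum_Km_mul]
  simp_rw [step2, ite_mul, zero_mul, Finset.sum_ite_eq, Finset.mem_univ, if_true]
  refine Finset.sum_congr rfl fun y _ => ?_
  have : ((2:ℂ)^l)^m * ((cc l)^m * (cc l)^m) = 1 := by
    rw [← cc_pow_sq (l := l) (m := m)]; ring
  rw [← mul_assoc, this, one_mul]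

lemma Fop_invol (ψ : EuclideanSpace ℂ ((Fin m → (Fin l → Fin 2)) × E)) :
    Fop l m E (Fop l m E ψ) = ψ := by
  ext q
  obtain ⟨x, e⟩ := q
  rw [Fop_apply]
  have step1 : ∀ y : Fin m → Fin l → Fin 2,
      Km x y * Fop l m E ψ (y, e)
        = ∑ z : Fin m → Fin l → Fin 2, (Km x y * Km z y) * ((cc l)^m * ψ (z, e)) := by
    intro y
    rw [Fop_apply, Finset.mul_sum]
    rw [Finset.mul_sum]
    refine Finset.sum_congr rfl fun z _ => ?_
    rw [Km_symm z y]; ring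
  simp_rw [step1]
  conv_lhs => rw [Finset.sum_comm]
  have step2 : ∀ z : Fin m → Fin l → Fin 2,
      ∑ y : Fin m → Fin l → Fin 2, (Km x y * Km z y) * ((cc l)^m * ψ (z, e))
        = (if x = z then ((2:ℂ)^l)^m else 0) * ((cc l)^m * ψ (z, e)) := by
    intro z
    rw [← Finset.sum_mul, sum_Km_mul]
  simp_rw [step2, ite_mul, zero_mul, Finset.sum_ite_eq, Finset.mem_univ, if_true]
  rw [← mul_assoc, ← mul_assoc]
  rw [show (cc l)^m * ((2:ℂ)^l)^m * (cc l)^m = (cc l)^m * (cc l)^m * ((2:ℂ)^l)^m by ring]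
  rw [cc_pow_sq, one_mul]

end SML
namespace SML
variable {l m : ℕ} {E : Type*} [Fintype E]

/-- sum of squared norms -/
noncomputable def nsq (f : EuclideanSpace ℂ ((Fin m → (Fin l → Fin 2)) × E)) : ℝ :=
  ∑ q : (Fin m → (Fin l → Fin 2)) × E, ‖f q‖^2

lemma nsq_nonneg (f : EuclideanSpace ℂ ((Fin m → (Fin l → Fin 2)) × E)) : 0 ≤ nsq f :=
  Finset.sum_nonneg fun q _ => sq_nonneg _

lemma nsq_eq_norm_sq (f : EuclideanSpace ℂ ((Fin m → (Fin l → Fin 2)) × E)) :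
    nsq f = ‖f‖^2 := by
  rw [EuclideanSpace.norm_eq, Real.sq_sqrt (Finset.sum_nonneg fun q _ => sq_nonneg _)]
  rfl

lemma conj_mul_self_sum (f : EuclideanSpace ℂ ((Fin m → (Fin l → Fin 2)) × E)) :
    ∑ q : (Fin m → (Fin l → Fin 2)) × E, (starRingEnd ℂ) (f q) * f q = (nsq f : ℂ) := by
  unfold nsq
  push_cast
  refine Finset.sum_congr rfl fun q _ => ?_
  rw [Complex.conj_mul']

lemma nsq_Fop (ψ : EuclideanSpace ℂ ((Fin m → (Fin l → Fin 2)) × E)) :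
    nsq (Fop l m E ψ) = nsq ψ := by
  have h := Fop_parseval (l := l) (m := m) (E := E) ψ ψ
  rw [conj_mul_self_sum, conj_mul_self_sum] at h
  exact_mod_cast h

/-- Key involution: the Fourier sum against an `S`-independent amplitude vanishes
whenever some register in `S` has a nonzero frequency. -/
lemma sum_Km_mul_eq_zero {S : Finset (Fin m)} {φ : ((Fin m → (Fin l → Fin 2)) × E) → ℂ}
    (hφ : ∀ (x x' : Fin m → (Fin l → Fin 2)) (e : E),
      (∀ i ∉ S, x i = x' i) → φ (x, e) = φ (x', e))
    {w : Fin m → Fin l → Fin 2} {i0 : Fin m} (hi0 : i0 ∈ S) {j0 : Fin l}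
    (hj : w i0 j0 = 1) (e : E) :
    ∑ y : Fin m → Fin l → Fin 2, Km w y * φ (y, e) = 0 := by
  classical
  set ι : (Fin m → Fin l → Fin 2) → (Fin m → Fin l → Fin 2) :=
    fun y => Function.update y i0 (Function.update (y i0) j0 (y i0 j0 + 1)) with hι
  have hinv : Function.Involutive ι := by
    intro y
    funext i
    by_cases hi : i = i0
    · subst hi
      simp only [hι, Function.update_self]
      funext j
      by_cases hjj : j = j0
      · subst hjj
        simp only [Function.update_self]
        omega
      · simp [Function.update_of_ne hjj]
    · simp [hι, Function.update_of_ne hi]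
  have hφeq : ∀ y, φ (ι y, e) = φ (y, e) := by
    intro y
    refine hφ _ _ _ fun i hiS => ?_
    have : i ≠ i0 := fun h => hiS (h ▸ hi0)
    simp [hι, Function.update_of_ne this]
  have hKm : ∀ y, Km w (ι y) = - Km w y := by
    intro y
    have heps : eps (w i0) (ι y i0) = - eps (w i0) (y i0) := by
      have h1 : (fun j => chi (w i0 j) (ι y i0 j))
          = Function.update (fun j => chi (w i0 j) (y i0 j)) j0 (- chi (w i0 j0) (y i0 j0)) := by
        funext j
        by_cases hjj : j = j0
        · subst hjj
          simp only [hι, Function.update_self]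
          rw [hj, chi_flip]
        · simp [hι, Function.update_of_ne hjj]
      unfold eps
      rw [show (∏ j, chi (w i0 j) (ι y i0 j))
          = ∏ j, Function.update (fun j => chi (w i0 j) (y i0 j)) j0
              (- chi (w i0 j0) (y i0 j0)) j from by rw [← h1]]
      rw [Finset.prod_update_of_mem (Finset.mem_univ j0)]
      rw [Finset.prod_eq_mul_prod_sdiff_singleton_of_mem (Finset.mem_univ j0)
        (fun j => chi (w i0 j) (y i0 j))]
      ring
    have h2 : (fun i => eps (w i) (ι y i))
        = Function.update (fun i => eps (w i) (y i)) i0 (- eps (w i0) (y i0)) := by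
      funext i
      by_cases hi : i = i0
      · subst hi
        rw [Function.update_self, ← heps]
      · simp [hι, Function.update_of_ne hi]
    unfold Km
    rw [show (∏ i, eps (w i) (ι y i))
        = ∏ i, Function.update (fun i => eps (w i) (y i)) i0 (- eps (w i0) (y i0)) i from by
          rw [← h2]]
    rw [Finset.prod_update_of_mem (Finset.mem_univ i0)]
    rw [Finset.prod_eq_mul_prod_sdiff_singleton_of_mem (Finset.mem_univ i0)
      (fun i => eps (w i) (y i))]
    ring
  have hswap : ∑ y : Fin m → Fin l → Fin 2, Km w y * φ (y, e)
      = ∑ y : Fin m → Fin l → Fin 2, Km w (ι y) * φ (ι y, e) :=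
    (Fintype.sum_equiv hinv.toPerm _ _ (fun y => rfl)).symm
  have : ∑ y : Fin m → Fin l → Fin 2, Km w y * φ (y, e)
      = - ∑ y : Fin m → Fin l → Fin 2, Km w y * φ (y, e) := by
    nth_rewrite 1 [hswap]
    rw [← Finset.sum_neg_distrib]
    refine Finset.sum_congr rfl fun y _ => ?_
    rw [hKm, hφeq]
    ring
  linear_combination this / 2

end SML
namespace SML
variable {l m : ℕ} {E : Type*} [Fintype E]

def zerov (l : ℕ) : Fin l → Fin 2 := fun _ => 0

/-- submodule of vectors supported on frequency patterns with at least n zero registers -/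
def Vsub (l m n : ℕ) (E : Type*) [Fintype E] :
    Submodule ℂ (EuclideanSpace ℂ ((Fin m → (Fin l → Fin 2)) × E)) where
  carrier := {f | ∀ q : (Fin m → (Fin l → Fin 2)) × E,
    (Finset.univ.filter fun i => q.1 i = zerov l).card < n → f q = 0}
  zero_mem' := fun q _ => rfl
  add_mem' := by
    intro f g hf hg q hq
    show f q + g q = 0
    rw [hf q hq, hg q hq, add_zero]
  smul_mem' := by
    intro c f hf q hq
    show c * f q = 0
    rw [hf q hq, mul_zero]

lemma Fop_gen_mem (n : ℕ) {S : Finset (Fin m)} {φ : ((Fin m → (Fin l → Fin 2)) × E) → ℂ}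
    (hS : n ≤ S.card)
    (hφ : ∀ (x x' : Fin m → (Fin l → Fin 2)) (e : E),
      (∀ i ∉ S, x i = x' i) → φ (x, e) = φ (x', e)) :
    Fop l m E (WithLp.toLp 2 (fun q => (((Real.sqrt (2 ^ l) : ℝ) : ℂ)⁻¹) ^ S.card * φ q)) ∈ Vsub l m n E := by
  rintro ⟨w, e⟩ hq
  have hex : ∃ i0 ∈ S, w i0 ≠ zerov l := by
    by_contra h
    push_neg at h
    have hsub : S ⊆ Finset.univ.filter fun i => w i = zerov l := by
      intro i hi
      exact Finset.mem_filter.mpr ⟨Finset.mem_univ i, h i hi⟩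
    exact absurd (le_trans hS (Finset.card_le_card hsub)) (not_le.mpr hq)
  obtain ⟨i0, hi0, hw⟩ := hex
  obtain ⟨j0, hj0⟩ := Function.ne_iff.mp hw
  have hj1 : w i0 j0 = 1 := by
    have h := hj0
    simp only [zerov] at h
    omega
  rw [Fop_apply]
  have hφ2 : ∀ (x x' : Fin m → (Fin l → Fin 2)) (e : E),
      (∀ i ∉ S, x i = x' i) →
        (((Real.sqrt (2 ^ l) : ℝ) : ℂ)⁻¹) ^ S.card * φ (x, e)
          = (((Real.sqrt (2 ^ l) : ℝ) : ℂ)⁻¹) ^ S.card * φ (x', e) := by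
    intro x x' e' h
    rw [hφ x x' e' h]
  rw [sum_Km_mul_eq_zero (φ := fun q => (((Real.sqrt (2 ^ l) : ℝ) : ℂ)⁻¹) ^ S.card * φ q)
    hφ2 hi0 hj1 e, mul_zero]

lemma Fop_mem_Vsub (n : ℕ)
    (W : Submodule ℂ (EuclideanSpace ℂ ((Fin m → (Fin l → Fin 2)) × E)))
    (hW : W = Submodule.span ℂ
      {v : EuclideanSpace ℂ ((Fin m → (Fin l → Fin 2)) × E) |
        ∃ (S : Finset (Fin m)) (φ : ((Fin m → (Fin l → Fin 2)) × E) → ℂ),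
          n ≤ S.card ∧
          (∀ (x x' : Fin m → (Fin l → Fin 2)) (e : E),
            (∀ i ∉ S, x i = x' i) → φ (x, e) = φ (x', e)) ∧
          v = fun q => (((Real.sqrt (2 ^ l) : ℝ) : ℂ)⁻¹) ^ S.card * φ q})
    (ψ : EuclideanSpace ℂ ((Fin m → (Fin l → Fin 2)) × E)) (hψ : ψ ∈ W) :
    Fop l m E ψ ∈ Vsub l m n E := by
  subst hW
  refine Submodule.span_induction ?_ ?_ ?_ ?_ hψ
  · rintro v ⟨S, φ, hS, hφ, hv⟩
    rw [show v = WithLp.toLp 2 v.ofLp from rfl, hv]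
    exact Fop_gen_mem n hS hφ
  · rw [map_zero]; exact (Vsub l m n E).zero_mem
  · intro f g _ _ hf hg
    rw [map_add]; exact (Vsub l m n E).add_mem hf hg
  · intro c f _ hf
    rw [map_smul]; exact (Vsub l m n E).smul_mem c hf

/-- masking linear map -/
def mask (l m : ℕ) (E : Type*) [Fintype E] (i : Fin m) :
    EuclideanSpace ℂ ((Fin m → (Fin l → Fin 2)) × E) →ₗ[ℂ]
      EuclideanSpace ℂ ((Fin m → (Fin l → Fin 2)) × E) where
  toFun f := WithLp.toLp 2 (fun q => if q.1 i = zerov l then f q else 0)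
  map_add' f g := by
    ext q
    by_cases h : q.1 i = zerov l <;> simp [h, PiLp.add_apply]
  map_smul' c f := by
    ext q
    by_cases h : q.1 i = zerov l <;> simp [h, PiLp.smul_apply]

lemma mask_apply (i : Fin m) (f : EuclideanSpace ℂ ((Fin m → (Fin l → Fin 2)) × E))
    (q : (Fin m → (Fin l → Fin 2)) × E) :
    mask l m E i f q = if q.1 i = zerov l then f q else 0 := rfl

lemma nsq_mask (i : Fin m) (f : EuclideanSpace ℂ ((Fin m → (Fin l → Fin 2)) × E)) :
    nsq (mask l m E i f)
      = ∑ q : (Fin m → (Fin l → Fin 2)) × E, if q.1 i = zerov l then ‖f q‖^2 else 0 := by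
  unfold nsq
  refine Finset.sum_congr rfl fun q _ => ?_
  rw [mask_apply]
  by_cases h : q.1 i = zerov l <;> simp [h]

lemma counting (n : ℕ) (g : EuclideanSpace ℂ ((Fin m → (Fin l → Fin 2)) × E))
    (hg : g ∈ Vsub l m n E) :
    (n : ℝ) * nsq g ≤ ∑ i : Fin m,
      ∑ q : (Fin m → (Fin l → Fin 2)) × E, if q.1 i = zerov l then ‖g q‖^2 else 0 := by
  rw [Finset.sum_comm]
  have key : ∀ q : (Fin m → (Fin l → Fin 2)) × E,
      ∑ i : Fin m, (if q.1 i = zerov l then ‖g q‖^2 else 0)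
        = ((Finset.univ.filter fun i => q.1 i = zerov l).card : ℝ) * ‖g q‖^2 := by
    intro q
    rw [← Finset.sum_filter, Finset.sum_const, nsmul_eq_mul]
  simp_rw [key]
  unfold nsq
  rw [Finset.mul_sum]
  refine Finset.sum_le_sum fun q _ => ?_
  by_cases hzero : g q = 0
  · simp [hzero]
  · have hcard : (n : ℝ) ≤ ((Finset.univ.filter fun i => q.1 i = zerov l).card : ℝ) := by
      exact_mod_cast le_of_not_gt fun hlt => hzero (hg q hlt)
    exact mul_le_mul_of_nonneg_right hcard (sq_nonneg _)

end SML
namespace SML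
variable {l m : ℕ} {E : Type*} [Fintype E]

lemma Km_comp (σ : Equiv.Perm (Fin m)) (x y : Fin m → Fin l → Fin 2) :
    Km (x ∘ σ) (y ∘ σ) = Km x y := by
  unfold Km
  exact Equiv.prod_comp σ (fun i => eps (x i) (y i))

lemma Fop_perm (σ : Equiv.Perm (Fin m))
    (ψ g : EuclideanSpace ℂ ((Fin m → (Fin l → Fin 2)) × E))
    (hg : ∀ (x : Fin m → Fin l → Fin 2) (e : E), g (x, e) = ψ (x ∘ σ, e))
    (x : Fin m → Fin l → Fin 2) (e : E) :
    Fop l m E g (x, e) = Fop l m E ψ (x ∘ σ, e) := by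
  rw [Fop_apply, Fop_apply]
  congr 1
  have hρ : ∀ y : Fin m → Fin l → Fin 2,
      Km x y * g (y, e) = Km (x ∘ σ) (y ∘ σ) * ψ (y ∘ σ, e) := by
    intro y
    rw [Km_comp, hg]
  simp_rw [hρ]
  exact Fintype.sum_equiv (Equiv.arrowCongr σ.symm (Equiv.refl (Fin l → Fin 2)))
    _ _ (fun y => rfl)

lemma slice_reindex (σ : Equiv.Perm (Fin m)) (i : Fin m)
    (h : EuclideanSpace ℂ ((Fin m → (Fin l → Fin 2)) × E)) :
    ∑ q : (Fin m → (Fin l → Fin 2)) × E,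
        (if q.1 i = zerov l then ‖h (q.1 ∘ σ, q.2)‖^2 else 0)
      = ∑ q : (Fin m → (Fin l → Fin 2)) × E,
          (if q.1 (σ.symm i) = zerov l then ‖h q‖^2 else 0) := by
  refine Fintype.sum_equiv
    (Equiv.prodCongr (Equiv.arrowCongr σ.symm (Equiv.refl (Fin l → Fin 2)))
      (Equiv.refl E)) _ _ fun q => ?_
  obtain ⟨x, e⟩ := q
  simp only [Equiv.prodCongr_apply, Equiv.coe_refl, Prod.map]
  have h1 : (Equiv.arrowCongr σ.symm (Equiv.refl (Fin l → Fin 2))) x = x ∘ σ := rfl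
  rw [h1]
  have h2 : (x ∘ σ) (σ.symm i) = x i := by
    simp
  rw [h2]
  rfl

lemma Km_update (i : Fin m) (x y : Fin m → Fin l → Fin 2) (v : Fin l → Fin 2)
    (hy : y i = zerov l) :
    Km (Function.update x i v) y = Km x y := by
  unfold Km
  have h1 : (fun i' => eps (Function.update x i v i') (y i'))
      = Function.update (fun i' => eps (x i') (y i')) i (eps v (y i)) := by
    funext i'
    by_cases hi : i' = i
    · subst hi; simp
    · simp [Function.update_of_ne hi]
  rw [show (∏ i', eps (Function.update x i v i') (y i'))
      = ∏ i', Function.update (fun i' => eps (x i') (y i')) i (eps v (y i)) i' from by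
        rw [← h1]]
  rw [Finset.prod_update_of_mem (Finset.mem_univ i)]
  rw [Finset.prod_eq_mul_prod_sdiff_singleton_of_mem (Finset.mem_univ i)
    (fun i' => eps (x i') (y i'))]
  rw [hy]
  unfold zerov
  rw [eps_zero, eps_zero]

lemma Fop_mask_const (i : Fin m) (g : EuclideanSpace ℂ ((Fin m → (Fin l → Fin 2)) × E))
    (hg : ∀ q : (Fin m → (Fin l → Fin 2)) × E, q.1 i ≠ zerov l → g q = 0)
    (x : Fin m → Fin l → Fin 2) (v : Fin l → Fin 2) (e : E) :
    Fop l m E g (Function.update x i v, e) = Fop l m E g (x, e) := by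
  rw [Fop_apply, Fop_apply]
  congr 1
  refine Finset.sum_congr rfl fun y _ => ?_
  by_cases hy : y i = zerov l
  · rw [Km_update i x y v hy]
  · rw [hg (y, e) hy, mul_zero, mul_zero]

lemma sum_const_register (i : Fin m) (F : (Fin m → Fin l → Fin 2) → ℝ)
    (hF : ∀ x v, F (Function.update x i v) = F x) :
    ∑ x : Fin m → Fin l → Fin 2, F x
      = 2^l * ∑ x : Fin m → Fin l → Fin 2, (if x i = zerov l then F x else 0) := by
  classical
  have e1 := Fintype.sum_equiv (Equiv.piSplitAt i (fun _ : Fin m => (Fin l → Fin 2))).symm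
    (fun p => F ((Equiv.piSplitAt i (fun _ : Fin m => (Fin l → Fin 2))).symm p))
    F (fun p => rfl)
  have e2 := Fintype.sum_equiv (Equiv.piSplitAt i (fun _ : Fin m => (Fin l → Fin 2))).symm
    (fun p => if ((Equiv.piSplitAt i (fun _ : Fin m => (Fin l → Fin 2))).symm p) i = zerov l
        then F ((Equiv.piSplitAt i (fun _ : Fin m => (Fin l → Fin 2))).symm p) else 0)
    (fun x => if x i = zerov l then F x else 0) (fun p => rfl)
  rw [← e1, ← e2]
  rw [Fintype.sum_prod_type, Fintype.sum_prod_type]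
  have hval : ∀ (v : Fin l → Fin 2) (w : {j // j ≠ i} → (Fin l → Fin 2)),
      (Equiv.piSplitAt i (fun _ : Fin m => (Fin l → Fin 2))).symm (v, w) i = v := by
    intro v w
    simp [Equiv.piSplitAt]
  have hFval : ∀ (v : Fin l → Fin 2) (w : {j // j ≠ i} → (Fin l → Fin 2)),
      F ((Equiv.piSplitAt i (fun _ : Fin m => (Fin l → Fin 2))).symm (v, w))
        = F ((Equiv.piSplitAt i (fun _ : Fin m => (Fin l → Fin 2))).symm (zerov l, w)) := by
    intro v w
    have hupd : (Equiv.piSplitAt i (fun _ : Fin m => (Fin l → Fin 2))).symm (v, w)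
        = Function.update
            ((Equiv.piSplitAt i (fun _ : Fin m => (Fin l → Fin 2))).symm (zerov l, w)) i v := by
      funext j
      by_cases hj : j = i
      · subst hj
        rw [Function.update_self, hval]
      · rw [Function.update_of_ne hj]
        simp [Equiv.piSplitAt, hj]
    rw [hupd, hF]
  calc ∑ v, ∑ w, F ((Equiv.piSplitAt i (fun _ : Fin m => (Fin l → Fin 2))).symm (v, w))
      = ∑ v : Fin l → Fin 2, ∑ w : {j // j ≠ i} → (Fin l → Fin 2),
          F ((Equiv.piSplitAt i (fun _ : Fin m => (Fin l → Fin 2))).symm (zerov l, w)) := by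
        refine Finset.sum_congr rfl fun v _ => Finset.sum_congr rfl fun w _ => hFval v w
    _ = 2^l * ∑ w : {j // j ≠ i} → (Fin l → Fin 2),
          F ((Equiv.piSplitAt i (fun _ : Fin m => (Fin l → Fin 2))).symm (zerov l, w)) := by
        rw [Finset.sum_const, nsmul_eq_mul]
        congr 1
        simp [Fintype.card_fun]
    _ = 2^l * ∑ v, ∑ w, (if ((Equiv.piSplitAt i (fun _ : Fin m => (Fin l → Fin 2))).symm (v, w)) i = zerov l
          then F ((Equiv.piSplitAt i (fun _ : Fin m => (Fin l → Fin 2))).symm (v, w)) else 0) := by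
        congr 1
        have : ∀ (v : Fin l → Fin 2) (w : {j // j ≠ i} → (Fin l → Fin 2)),
            (if ((Equiv.piSplitAt i (fun _ : Fin m => (Fin l → Fin 2))).symm (v, w)) i = zerov l
              then F ((Equiv.piSplitAt i (fun _ : Fin m => (Fin l → Fin 2))).symm (v, w)) else 0)
            = (if v = zerov l
                then F ((Equiv.piSplitAt i (fun _ : Fin m => (Fin l → Fin 2))).symm (zerov l, w)) else 0) := by
          intro v w
          rw [hval]
          by_cases hv : v = zerov l
          · subst hv; simp
          · simp [hv]
        simp_rw [this]
        rw [Finset.sum_comm]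
        refine (Finset.sum_congr rfl fun w _ => ?_).symm
        rw [Finset.sum_ite_eq' Finset.univ (zerov l)]
        simp

end SML

set_option maxHeartbeats 1600000 in
open SML in
/-- Symmetric measurement lemma: a permutation-symmetric unit state supported on the
subspace `W` spanned by states having at least `n` of the `m` registers in the uniform
superposition `|+^l⟩` yields outcome `0^l` on the first register with probability at
least `2^{-l} n/m - 2^{1-l/2} √(n(m-n))/m`. -/
theorem symmetric_measurement_lemma
    (l m n : ℕ) (hn : 1 ≤ n) (hnm : n ≤ m)
    {E : Type*} [Fintype E]
    (W : Submodule ℂ (EuclideanSpace ℂ ((Fin m → (Fin l → Fin 2)) × E)))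
    (hW : W = Submodule.span ℂ
      {v : EuclideanSpace ℂ ((Fin m → (Fin l → Fin 2)) × E) |
        ∃ (S : Finset (Fin m)) (φ : ((Fin m → (Fin l → Fin 2)) × E) → ℂ),
          n ≤ S.card ∧
          (∀ (x x' : Fin m → (Fin l → Fin 2)) (e : E),
            (∀ i ∉ S, x i = x' i) → φ (x, e) = φ (x', e)) ∧
          v = fun q => (((Real.sqrt (2 ^ l) : ℝ) : ℂ)⁻¹) ^ S.card * φ q})
    (act : Equiv.Perm (Fin m) →
      EuclideanSpace ℂ ((Fin m → (Fin l → Fin 2)) × E) →ₗ[ℂ]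
        EuclideanSpace ℂ ((Fin m → (Fin l → Fin 2)) × E))
    (hact : ∀ σ (v : EuclideanSpace ℂ ((Fin m → (Fin l → Fin 2)) × E))
      (x : Fin m → (Fin l → Fin 2)) (e : E), act σ v (x, e) = v (x ∘ σ, e))
    (ψ : EuclideanSpace ℂ ((Fin m → (Fin l → Fin 2)) × E))
    (hψW : ψ ∈ W) (hψ : ‖ψ‖ = 1)
    (hsym : ∀ (A : EuclideanSpace ℂ ((Fin m → (Fin l → Fin 2)) × E) →ₗ[ℂ]
        EuclideanSpace ℂ ((Fin m → (Fin l → Fin 2)) × E)) (σ : Equiv.Perm (Fin m)),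
      ‖A (act σ ψ)‖ = ‖A ψ‖) :
    ((2 : ℝ) ^ l)⁻¹ * n / m -
        2 * (Real.sqrt (2 ^ l))⁻¹ * Real.sqrt ((n : ℝ) * ((m : ℝ) - n)) / m
      ≤ ∑ q ∈ Finset.univ.filter
          (fun q : (Fin m → (Fin l → Fin 2)) × E => q.1 ⟨0, by omega⟩ = fun _ => 0),
          ‖ψ q‖ ^ 2 := by
  classical
  set i1 : Fin m := ⟨0, by omega⟩ with hi1
  set Fψ : EuclideanSpace ℂ ((Fin m → (Fin l → Fin 2)) × E) := Fop l m E ψ with hFψ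
  have hFV : Fψ ∈ Vsub l m n E := Fop_mem_Vsub n W hW ψ hψW
  have hnsqψ : nsq ψ = 1 := by rw [nsq_eq_norm_sq, hψ]; norm_num
  have hnsqF : nsq Fψ = 1 := by rw [hFψ, nsq_Fop, hnsqψ]
  -- slice masses in frequency space
  set tsl : Fin m → ℝ := fun i => ∑ q : (Fin m → (Fin l → Fin 2)) × E,
    if q.1 i = zerov l then ‖Fψ q‖^2 else 0 with htsl
  have hcount : (n : ℝ) ≤ ∑ i : Fin m, tsl i := by
    have := counting n Fψ hFV
    rw [hnsqF, mul_one] at this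
    exact this
  -- all slices equal by symmetry
  have hslice_eq : ∀ i : Fin m, tsl i = tsl i1 := by
    intro i
    set σ : Equiv.Perm (Fin m) := Equiv.swap i1 i with hσ
    have h3 : ‖(mask l m E i1 ∘ₗ Fop l m E) (act σ ψ)‖ = ‖(mask l m E i1 ∘ₗ Fop l m E) ψ‖ :=
      hsym _ σ
    have h3' : nsq (mask l m E i1 (Fop l m E (act σ ψ))) = nsq (mask l m E i1 Fψ) := by
      rw [nsq_eq_norm_sq, nsq_eq_norm_sq, hFψ]
      rw [show mask l m E i1 (Fop l m E (act σ ψ))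
          = (mask l m E i1 ∘ₗ Fop l m E) (act σ ψ) from rfl]
      rw [show mask l m E i1 (Fop l m E ψ) = (mask l m E i1 ∘ₗ Fop l m E) ψ from rfl]
      rw [h3]
    have h1 : nsq (mask l m E i1 (Fop l m E (act σ ψ))) = tsl i := by
      rw [nsq_mask]
      have step : ∀ q : (Fin m → (Fin l → Fin 2)) × E,
          (if q.1 i1 = zerov l then ‖Fop l m E (act σ ψ) q‖^2 else 0)
            = (if q.1 i1 = zerov l then ‖Fψ (q.1 ∘ σ, q.2)‖^2 else 0) := by
        rintro ⟨x, e⟩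
        rw [Fop_perm σ ψ (act σ ψ) (hact σ ψ) x e]
      simp_rw [step]
      rw [slice_reindex σ i1 Fψ]
      have : σ.symm i1 = i := by
        rw [hσ, Equiv.symm_swap, Equiv.swap_apply_left]
      rw [this]
    have h2 : nsq (mask l m E i1 Fψ) = tsl i1 := nsq_mask i1 Fψ
    rw [← h1, h3', h2]
  set t : ℝ := tsl i1 with ht
  have htm : (n : ℝ) ≤ m * t := by
    calc (n : ℝ) ≤ ∑ i : Fin m, tsl i := hcount
    _ = ∑ _i : Fin m, t := Finset.sum_congr rfl fun i _ => hslice_eq i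
    _ = m * t := by rw [Finset.sum_const, Finset.card_univ, Fintype.card_fin, nsmul_eq_mul]
  have ht1 : t ≤ 1 := by
    rw [ht, htsl, ← hnsqF]
    unfold nsq
    refine Finset.sum_le_sum fun q _ => ?_
    by_cases h : q.1 i1 = zerov l <;> simp [h, sq_nonneg]
  have ht0 : 0 ≤ t := by
    rw [ht, htsl]
    exact Finset.sum_nonneg fun q _ => by positivity
  -- Part II: decompose ψ = a + r with a the |+⟩-component on register i1
  set g : EuclideanSpace ℂ ((Fin m → (Fin l → Fin 2)) × E) := mask l m E i1 Fψ with hgdef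
  set a : EuclideanSpace ℂ ((Fin m → (Fin l → Fin 2)) × E) := Fop l m E g with hadef
  have hg0 : ∀ q : (Fin m → (Fin l → Fin 2)) × E, q.1 i1 ≠ zerov l → g q = 0 := by
    intro q hq
    rw [hgdef, mask_apply, if_neg hq]
  have hnsq_g : nsq g = t := by
    rw [hgdef, nsq_mask]
  have hnsq_a : nsq a = t := by
    rw [hadef, nsq_Fop, hnsq_g]
  have hra : ψ - a = Fop l m E (Fψ - g) := by
    rw [map_sub, hadef, hFψ, Fop_invol]
  have hortho : ∑ q : (Fin m → (Fin l → Fin 2)) × E,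
      (starRingEnd ℂ) (a q) * (ψ q - a q) = 0 := by
    have hpt : ∀ q : (Fin m → (Fin l → Fin 2)) × E, ψ q - a q = (ψ - a) q := fun q => rfl
    simp_rw [hpt, hra, hadef]
    rw [Fop_parseval]
    refine Finset.sum_eq_zero fun q _ => ?_
    by_cases h : q.1 i1 = zerov l
    · have : (Fψ - g) q = Fψ q - g q := rfl
      rw [this, hgdef, mask_apply, if_pos h, sub_self, mul_zero]
    · rw [hgdef, mask_apply, if_neg h, map_zero, zero_mul]
  have ha_psi : ∑ q : (Fin m → (Fin l → Fin 2)) × E,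
      (starRingEnd ℂ) (a q) * ψ q = (t : ℂ) := by
    have expand : ∑ q : (Fin m → (Fin l → Fin 2)) × E,
        (starRingEnd ℂ) (a q) * (ψ q - a q)
          = (∑ q : (Fin m → (Fin l → Fin 2)) × E, (starRingEnd ℂ) (a q) * ψ q)
            - ∑ q : (Fin m → (Fin l → Fin 2)) × E, (starRingEnd ℂ) (a q) * a q := by
      rw [← Finset.sum_sub_distrib]
      exact Finset.sum_congr rfl fun q _ => by ring
    rw [expand, conj_mul_self_sum, hnsq_a] at hortho
    linear_combination hortho
  have hpsi_a : ∑ q : (Fin m → (Fin l → Fin 2)) × E,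
      (starRingEnd ℂ) (ψ q) * a q = (t : ℂ) := by
    have := congrArg (starRingEnd ℂ) ha_psi
    rw [map_sum] at this
    simp_rw [map_mul, RingHomCompTriple.comp_apply, RingHom.id_apply] at this
    rw [show (starRingEnd ℂ) ((t : ℝ) : ℂ) = ((t : ℝ) : ℂ) from Complex.conj_ofReal t] at this
    rw [← this]
    exact Finset.sum_congr rfl fun q _ => by ring
  set r : EuclideanSpace ℂ ((Fin m → (Fin l → Fin 2)) × E) := ψ - a with hrdef
  have hr_apply : ∀ q : (Fin m → (Fin l → Fin 2)) × E, r q = ψ q - a q := fun q => rfl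
  have hnsq_r : nsq r = 1 - t := by
    have hc : ((nsq r : ℝ) : ℂ) = ((1 : ℝ) : ℂ) - ((t : ℝ) : ℂ) := by
      rw [← conj_mul_self_sum]
      have expand : ∀ q : (Fin m → (Fin l → Fin 2)) × E,
          (starRingEnd ℂ) (r q) * r q
            = (starRingEnd ℂ) (ψ q) * ψ q - (starRingEnd ℂ) (ψ q) * a q
              - (starRingEnd ℂ) (a q) * ψ q + (starRingEnd ℂ) (a q) * a q := by
        intro q
        rw [hr_apply, map_sub]
        ring
      simp_rw [expand]
      rw [Finset.sum_add_distrib, Finset.sum_sub_distrib, Finset.sum_sub_distrib]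
      rw [conj_mul_self_sum, conj_mul_self_sum, hnsqψ, hnsq_a, ha_psi, hpsi_a]
      push_cast
      ring
    exact_mod_cast hc
  have hconst : ∀ (x : Fin m → (Fin l → Fin 2)) (v : Fin l → Fin 2) (e : E),
      a (Function.update x i1 v, e) = a (x, e) := by
    intro x v e
    rw [hadef]
    exact Fop_mask_const i1 g hg0 x v e
  -- slice sums on the computational side
  set SA : ℝ := ∑ q : (Fin m → (Fin l → Fin 2)) × E,
    (if q.1 i1 = zerov l then ‖a q‖^2 else 0) with hSAdef
  set SR : ℝ := ∑ q : (Fin m → (Fin l → Fin 2)) × E,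
    (if q.1 i1 = zerov l then ‖r q‖^2 else 0) with hSRdef
  set Q : ℝ := ∑ q : (Fin m → (Fin l → Fin 2)) × E,
    (if q.1 i1 = zerov l then ‖ψ q‖^2 else 0) with hQdef
  have hSA0 : 0 ≤ SA := Finset.sum_nonneg fun q _ => by positivity
  have hSR0 : 0 ≤ SR := Finset.sum_nonneg fun q _ => by positivity
  have hQ0 : 0 ≤ Q := Finset.sum_nonneg fun q _ => by positivity
  -- the target sum equals Q
  have hgoal_eq : ∑ q ∈ Finset.univ.filter
      (fun q : (Fin m → (Fin l → Fin 2)) × E => q.1 i1 = fun _ => 0), ‖ψ q‖ ^ 2 = Q := by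
    rw [hQdef, Finset.sum_filter]
    rw [show (fun _ : Fin l => (0 : Fin 2)) = zerov l from rfl]
  -- SA = 2^{-l} t
  have hSA_t : (2:ℝ)^l * SA = t := by
    have htot : nsq a = 2^l * SA := by
      unfold nsq
      rw [hSAdef]
      rw [Fintype.sum_prod_type, Fintype.sum_prod_type]
      rw [Finset.sum_comm, Finset.sum_comm
        (f := fun (x : Fin m → (Fin l → Fin 2)) (e : E) =>
          if (x, e).1 i1 = zerov l then ‖a (x, e)‖^2 else 0)]
      rw [Finset.mul_sum]
      refine Finset.sum_congr rfl fun e _ => ?_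
      exact sum_const_register i1 (fun x => ‖a (x, e)‖^2)
        (fun x v => by
          show ‖a (Function.update x i1 v, e)‖^2 = ‖a (x, e)‖^2
          rw [hconst])
    rw [← htot, hnsq_a]
  have hSR_le : SR ≤ 1 - t := by
    rw [← hnsq_r]
    unfold nsq
    refine Finset.sum_le_sum fun q _ => ?_
    by_cases h : q.1 i1 = zerov l <;> simp [h, sq_nonneg]
  -- Q ≥ SA + SR - 2 √SA √SR  via Cauchy–Schwarz
  have hcross : ∑ q : (Fin m → (Fin l → Fin 2)) × E,
      (if q.1 i1 = zerov l then ((starRingEnd ℂ) (a q) * r q).re else 0)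
        ≥ -(Real.sqrt SA * Real.sqrt SR) := by
    have hCS : (∑ q : (Fin m → (Fin l → Fin 2)) × E,
        (if q.1 i1 = zerov l then ‖a q‖ else 0) *
          (if q.1 i1 = zerov l then ‖r q‖ else 0)) ≤ Real.sqrt SA * Real.sqrt SR := by
      have h2 := Finset.sum_mul_sq_le_sq_mul_sq Finset.univ
        (fun q : (Fin m → (Fin l → Fin 2)) × E => if q.1 i1 = zerov l then ‖a q‖ else 0)
        (fun q : (Fin m → (Fin l → Fin 2)) × E => if q.1 i1 = zerov l then ‖r q‖ else 0)
      have hfa : ∀ q : (Fin m → (Fin l → Fin 2)) × E,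
          (if q.1 i1 = zerov l then ‖a q‖ else 0)^2
            = (if q.1 i1 = zerov l then ‖a q‖^2 else 0) := by
        intro q; by_cases h : q.1 i1 = zerov l <;> simp [h]
      have hfr : ∀ q : (Fin m → (Fin l → Fin 2)) × E,
          (if q.1 i1 = zerov l then ‖r q‖ else 0)^2
            = (if q.1 i1 = zerov l then ‖r q‖^2 else 0) := by
        intro q; by_cases h : q.1 i1 = zerov l <;> simp [h]
      simp_rw [hfa, hfr] at h2
      rw [← hSAdef, ← hSRdef] at h2
      have hnn : 0 ≤ ∑ q : (Fin m → (Fin l → Fin 2)) × E,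
          (if q.1 i1 = zerov l then ‖a q‖ else 0) *
            (if q.1 i1 = zerov l then ‖r q‖ else 0) :=
        Finset.sum_nonneg fun q _ => mul_nonneg
          (by by_cases h : q.1 i1 = zerov l <;> simp [h]) 
          (by by_cases h : q.1 i1 = zerov l <;> simp [h])
      calc ∑ q : (Fin m → (Fin l → Fin 2)) × E,
            (if q.1 i1 = zerov l then ‖a q‖ else 0) *
              (if q.1 i1 = zerov l then ‖r q‖ else 0)
          = Real.sqrt ((∑ q : (Fin m → (Fin l → Fin 2)) × E,
              (if q.1 i1 = zerov l then ‖a q‖ else 0) *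
                (if q.1 i1 = zerov l then ‖r q‖ else 0))^2) := (Real.sqrt_sq hnn).symm
        _ ≤ Real.sqrt (SA * SR) := Real.sqrt_le_sqrt h2
        _ = Real.sqrt SA * Real.sqrt SR := Real.sqrt_mul hSA0 _
    have hterm : ∀ q : (Fin m → (Fin l → Fin 2)) × E,
        (if q.1 i1 = zerov l then ((starRingEnd ℂ) (a q) * r q).re else 0)
          ≥ -((if q.1 i1 = zerov l then ‖a q‖ else 0) *
              (if q.1 i1 = zerov l then ‖r q‖ else 0)) := by
      intro q
      by_cases h : q.1 i1 = zerov l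
      · simp only [h, if_true]
        have h1 : |((starRingEnd ℂ) (a q) * r q).re| ≤ ‖(starRingEnd ℂ) (a q) * r q‖ :=
          Complex.abs_re_le_norm _
        have h2 : ‖(starRingEnd ℂ) (a q) * r q‖ = ‖a q‖ * ‖r q‖ := by
          rw [norm_mul, RCLike.norm_conj]
        calc -(‖a q‖ * ‖r q‖) = -‖(starRingEnd ℂ) (a q) * r q‖ := by rw [h2]
          _ ≤ -|((starRingEnd ℂ) (a q) * r q).re| := neg_le_neg h1
          _ ≤ ((starRingEnd ℂ) (a q) * r q).re := neg_abs_le _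
      · simp [h]
    calc ∑ q : (Fin m → (Fin l → Fin 2)) × E,
          (if q.1 i1 = zerov l then ((starRingEnd ℂ) (a q) * r q).re else 0)
        ≥ ∑ q : (Fin m → (Fin l → Fin 2)) × E,
            -((if q.1 i1 = zerov l then ‖a q‖ else 0) *
              (if q.1 i1 = zerov l then ‖r q‖ else 0)) :=
          Finset.sum_le_sum fun q _ => hterm q
      _ = -(∑ q : (Fin m → (Fin l → Fin 2)) × E,
            (if q.1 i1 = zerov l then ‖a q‖ else 0) *
              (if q.1 i1 = zerov l then ‖r q‖ else 0)) := by
          rw [Finset.sum_neg_distrib]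
      _ ≥ -(Real.sqrt SA * Real.sqrt SR) := neg_le_neg hCS
  have hQ_lower : SA + SR - 2 * (Real.sqrt SA * Real.sqrt SR) ≤ Q := by
    have hexpand : ∀ q : (Fin m → (Fin l → Fin 2)) × E,
        (if q.1 i1 = zerov l then ‖ψ q‖^2 else 0)
          = (if q.1 i1 = zerov l then ‖a q‖^2 else 0)
            + (if q.1 i1 = zerov l then ‖r q‖^2 else 0)
            + 2 * (if q.1 i1 = zerov l then ((starRingEnd ℂ) (a q) * r q).re else 0) := by
      intro q
      by_cases h : q.1 i1 = zerov l
      · simp only [h, if_true]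
        have hq : ψ q = a q + r q := by rw [hr_apply]; ring
        rw [hq]
        have : ‖a q + r q‖^2 = Complex.normSq (a q + r q) := by
          rw [Complex.normSq_eq_norm_sq]
        rw [this, Complex.normSq_add]
        have h1 : ‖a q‖^2 = Complex.normSq (a q) := by rw [Complex.normSq_eq_norm_sq]
        have h2 : ‖r q‖^2 = Complex.normSq (r q) := by rw [Complex.normSq_eq_norm_sq]
        rw [h1, h2]
        have h3 : (a q * (starRingEnd ℂ) (r q)).re = ((starRingEnd ℂ) (a q) * r q).re := by
          rw [show (starRingEnd ℂ) (a q) * r q = (starRingEnd ℂ) (a q * (starRingEnd ℂ) (r q)) from by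
            rw [map_mul, RingHomCompTriple.comp_apply, RingHom.id_apply]]
          rw [Complex.conj_re]
        rw [h3]
      · simp [h]
    rw [hQdef]
    simp_rw [hexpand]
    rw [Finset.sum_add_distrib, Finset.sum_add_distrib, ← Finset.mul_sum]
    rw [← hSAdef, ← hSRdef]
    linarith only [hcross]
  -- endgame: real arithmetic
  rw [hgoal_eq]
  have hL : (0:ℝ) < (2:ℝ)^l := by positivity
  have hm1 : (1:ℝ) ≤ (m:ℝ) := by exact_mod_cast le_trans hn hnm
  have hm0 : (0:ℝ) < m := by linarith only [hm1]
  have hn0 : (0:ℝ) ≤ (n:ℝ) := Nat.cast_nonneg n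
  have hmn' : (n:ℝ) ≤ (m:ℝ) := by exact_mod_cast hnm
  set P : ℝ := (Real.sqrt ((2:ℝ)^l))⁻¹ with hPdef
  have hP0 : 0 ≤ P := by positivity
  have hP2 : P^2 = ((2:ℝ)^l)⁻¹ := by
    rw [hPdef, sq, ← mul_inv, Real.mul_self_sqrt hL.le]
  set al : ℝ := P * Real.sqrt ((n:ℝ)/m) with haldef
  set ga : ℝ := Real.sqrt (1 - (n:ℝ)/m) with hgadef
  have hal0 : 0 ≤ al := by positivity
  have hga0 : 0 ≤ ga := Real.sqrt_nonneg _
  have hs_le_t : (n:ℝ)/m ≤ t := by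
    rw [div_le_iff₀ hm0]
    linarith only [htm]
  have hs1 : (n:ℝ)/m ≤ 1 := by
    rw [div_le_one hm0]; exact hmn'
  have key1 : al^2 = ((2:ℝ)^l)⁻¹ * n / m := by
    rw [haldef, mul_pow, hP2, Real.sq_sqrt (by positivity), mul_div_assoc]
  have h1mn : 1 - (n:ℝ)/m = ((m:ℝ)-n)/m := by field_simp
  have key2 : 2 * P * Real.sqrt ((n:ℝ) * ((m:ℝ) - n)) / m = 2 * (al * ga) := by
    have hprod : Real.sqrt ((n:ℝ)/m) * Real.sqrt (((m:ℝ)-n)/m)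
        = Real.sqrt ((n:ℝ)*((m:ℝ)-n)) / m := by
      rw [← Real.sqrt_mul (by positivity : (0:ℝ) ≤ (n:ℝ)/m)]
      rw [div_mul_div_comm]
      rw [Real.sqrt_div (mul_nonneg hn0 (by linarith only [hmn'] : (0:ℝ) ≤ (m:ℝ)-n))]
      rw [Real.sqrt_mul_self hm0.le]
    rw [haldef, hgadef, h1mn, mul_assoc P, hprod]
    ring
  have hmain : al^2 - 2 * (al * ga) ≤ Q := by
    by_cases hT : al^2 - 2 * (al * ga) ≤ 0
    · linarith only [hQ0, hT]
    · push_neg at hT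
      have halpos : 2 * ga < al := by
        by_contra hcon
        push_neg at hcon
        have h5 : al * al ≤ (2 * ga) * al := mul_le_mul_of_nonneg_right hcon hal0
        have h6 : al^2 ≤ 2 * (al * ga) := by rw [sq]; linarith only [h5]
        linarith only [hT, h6]
      have hSA_val : SA = ((2:ℝ)^l)⁻¹ * t := by
        field_simp
        linarith only [hSA_t]
      have hu : al ≤ Real.sqrt SA := by
        have hsq : al^2 ≤ SA := by
          rw [key1, hSA_val]
          rw [mul_div_assoc]
          exact mul_le_mul_of_nonneg_left hs_le_t (by positivity)
        calc al = Real.sqrt (al^2) := (Real.sqrt_sq hal0).symm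
          _ ≤ Real.sqrt SA := Real.sqrt_le_sqrt hsq
      have hw : Real.sqrt SR ≤ ga := by
        have hsq : SR ≤ ga^2 := by
          rw [hgadef, Real.sq_sqrt (by linarith only [hs1] : (0:ℝ) ≤ 1 - (n:ℝ)/m)]
          linarith only [hSR_le, hs_le_t]
        calc Real.sqrt SR ≤ Real.sqrt (ga^2) := Real.sqrt_le_sqrt hsq
          _ = ga := Real.sqrt_sq hga0
      have h1 : al - ga ≤ Real.sqrt SA - Real.sqrt SR := by linarith only [hu, hw]
      have h2 : 0 ≤ al - ga := by linarith only [hga0, halpos]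
      have h3 : (al - ga)^2 ≤ (Real.sqrt SA - Real.sqrt SR)^2 :=
        pow_le_pow_left₀ h2 h1 2
      have hexp : (Real.sqrt SA - Real.sqrt SR)^2
          = SA + SR - 2 * (Real.sqrt SA * Real.sqrt SR) := by
        rw [sub_sq, Real.sq_sqrt hSA0, Real.sq_sqrt hSR0]
        ring
      have e1 : al^2 - 2 * (al * ga) ≤ (al - ga)^2 := by
        have := sq_nonneg ga
        linarith only [this, sq_nonneg ga, sub_sq al ga]
      linarith only [e1, h3, hexp, hQ_lower]
  linarith only [key1, key2, hmain]
end

section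
/- Let |\psi\rangle = |+^l\rangle_1 |\psi^+\rangle + |\psi^-\rangle be a unit vector in C^{2^l} \otimes H_E where \langle +^l|_1 |\psi^-\rangle = 0 and \||\psi^+\rangle\|^2 \ge p. Then \|\langle 0^l|_1 |\psi\rangle\|^2 \ge 2^{-l} p - 2^{1-l/2}\sqrt{p(1-p)}. -/
private lemma cnorm_add_sq (u v : ℂ) :
    ‖u + v‖ ^ 2 = ‖u‖ ^ 2 + ‖v‖ ^ 2 + 2 * ((starRingEnd ℂ) u * v).re := by
  simp only [Complex.sq_norm, Complex.normSq_apply,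
    Complex.add_re, Complex.add_im, Complex.mul_re, Complex.mul_im,
    Complex.conj_re, Complex.conj_im]
  ring

/-- Single-register measurement step: if `ψ = |+^l⟩₁|ψ⁺⟩ + |ψ⁻⟩` is a unit vector with
`⟨+^l|₁ψ⁻⟩ = 0` and `‖ψ⁺‖² ≥ p`, then the probability of measuring `0^l` on the first
register is at least `2^{-l} p - 2^{1-l/2} √(p(1-p))`. -/
theorem measure_zero_lower_bound
    (l : ℕ) {E : Type*} [Fintype E]
    (p : ℝ) (hp0 : 0 ≤ p) (hp1 : p ≤ 1)
    (ψ : EuclideanSpace ℂ ((Fin l → Fin 2) × E))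
    (ψplus : E → ℂ) (ψminus : (Fin l → Fin 2) × E → ℂ)
    (hdecomp : ∀ z e, ψ (z, e) = ((Real.sqrt (2 ^ l) : ℝ) : ℂ)⁻¹ * ψplus e + ψminus (z, e))
    (horth : ∀ e, ∑ z : Fin l → Fin 2, ψminus (z, e) = 0)
    (hnorm : ‖ψ‖ = 1)
    (hplus : p ≤ ∑ e, ‖ψplus e‖ ^ 2) :
    ((2 : ℝ) ^ l)⁻¹ * p - 2 * (Real.sqrt (2 ^ l))⁻¹ * Real.sqrt (p * (1 - p))
      ≤ ∑ e, ‖ψ (fun _ => 0, e)‖ ^ 2 := by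
  classical
  set z0 : Fin l → Fin 2 := fun _ => 0 with hz0
  set c : ℝ := (Real.sqrt ((2:ℝ) ^ l))⁻¹ with hc
  have h2l : (0:ℝ) < 2 ^ l := by positivity
  have hsqpos : 0 < Real.sqrt ((2:ℝ) ^ l) := Real.sqrt_pos.mpr h2l
  have hc0 : 0 < c := by positivity
  have hc2 : c ^ 2 = ((2:ℝ) ^ l)⁻¹ := by
    rw [hc, inv_pow, Real.sq_sqrt h2l.le]
  have hc1 : c ≤ 1 := by
    rw [hc]
    have h1 : (1:ℝ) ≤ 2 ^ l := by
      calc (1:ℝ) = 1 ^ l := (one_pow l).symm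
        _ ≤ 2 ^ l := by gcongr; norm_num
    have : (1:ℝ) ≤ Real.sqrt ((2:ℝ)^l) := by
      rw [show (1:ℝ) = Real.sqrt 1 by simp]
      exact Real.sqrt_le_sqrt h1
    exact inv_le_one_of_one_le₀ this
  -- coefficient
  set u : E → ℂ := fun e => ((Real.sqrt ((2:ℝ) ^ l) : ℝ) : ℂ)⁻¹ * ψplus e with hu
  have hunorm : ∀ e, ‖u e‖ = c * ‖ψplus e‖ := by
    intro e
    rw [hu]
    simp [norm_mul, Complex.norm_real, abs_of_nonneg hsqpos.le, hc]
  -- expansion of ‖ψ (z,e)‖²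
  have hexpand : ∀ z e, ‖ψ (z, e)‖ ^ 2
      = c ^ 2 * ‖ψplus e‖ ^ 2 + ‖ψminus (z, e)‖ ^ 2
        + 2 * ((starRingEnd ℂ) (u e) * ψminus (z, e)).re := by
    intro z e
    rw [hdecomp z e, cnorm_add_sq, hunorm e]
    ring
  -- cross terms vanish summed over z
  have hcross : ∀ e, ∑ z : Fin l → Fin 2, ((starRingEnd ℂ) (u e) * ψminus (z, e)).re = 0 := by
    intro e
    rw [← Complex.re_sum, ← Finset.mul_sum, horth e, mul_zero, Complex.zero_re]
  set A : ℝ := ∑ e, ‖ψplus e‖ ^ 2 with hA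
  set M : ℝ := ∑ e, ‖ψminus (z0, e)‖ ^ 2 with hM
  set S : ℝ := ∑ e, ‖ψ (z0, e)‖ ^ 2 with hS
  have hA0 : 0 ≤ A := Finset.sum_nonneg fun _ _ => by positivity
  have hM0 : 0 ≤ M := Finset.sum_nonneg fun _ _ => by positivity
  have hS0 : 0 ≤ S := Finset.sum_nonneg fun _ _ => by positivity
  -- total norm identity
  have hcard : (Fintype.card (Fin l → Fin 2) : ℝ) = 2 ^ l := by simp
  have hsum1 : ∑ x : (Fin l → Fin 2) × E, ‖ψ x‖ ^ 2 = 1 := by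
    have h := congrArg (· ^ 2) hnorm
    simp only [EuclideanSpace.norm_eq] at h
    rw [Real.sq_sqrt (Finset.sum_nonneg fun _ _ => by positivity), one_pow] at h
    exact h
  have hMtot : (∑ z : Fin l → Fin 2, ∑ e, ‖ψminus (z, e)‖ ^ 2) = 1 - A := by
    have key : ∑ x : (Fin l → Fin 2) × E, ‖ψ x‖ ^ 2
        = A + ∑ z : Fin l → Fin 2, ∑ e, ‖ψminus (z, e)‖ ^ 2 := by
      rw [Fintype.sum_prod_type]
      have hswap : (∑ z : Fin l → Fin 2, ∑ e : E, ‖ψ (z, e)‖ ^ 2)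
          = ∑ e : E, ∑ z : Fin l → Fin 2, ‖ψ (z, e)‖ ^ 2 := Finset.sum_comm
      rw [hswap]
      have : ∀ e, ∑ z : Fin l → Fin 2, ‖ψ (z, e)‖ ^ 2
          = ‖ψplus e‖ ^ 2 + ∑ z : Fin l → Fin 2, ‖ψminus (z, e)‖ ^ 2 := by
        intro e
        simp_rw [hexpand]
        rw [Finset.sum_add_distrib, Finset.sum_add_distrib, Finset.sum_const,
          ← Finset.mul_sum, hcross e, mul_zero, add_zero, nsmul_eq_mul]
        have : ((Finset.univ : Finset (Fin l → Fin 2)).card : ℝ) * (c ^ 2 * ‖ψplus e‖ ^ 2) = ‖ψplus e‖ ^ 2 := by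
          rw [Finset.card_univ]
          rw [hcard, hc2]
          field_simp
        rw [this]
      rw [Finset.sum_congr rfl fun e _ => this e, Finset.sum_add_distrib, ← hA]
      have hswap2 : (∑ e : E, ∑ z : Fin l → Fin 2, ‖ψminus (z, e)‖ ^ 2)
          = ∑ z : Fin l → Fin 2, ∑ e : E, ‖ψminus (z, e)‖ ^ 2 := Finset.sum_comm
      rw [hswap2]
    have := hsum1
    rw [key] at this
    linarith
  have hM_le : M ≤ 1 - A := by
    rw [← hMtot]
    exact Finset.single_le_sum
      (f := fun z => ∑ e, ‖ψminus (z, e)‖ ^ 2)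
      (fun z _ => Finset.sum_nonneg fun _ _ => by positivity) (Finset.mem_univ z0)
  have hA1 : A ≤ 1 := by nlinarith
  -- lower bound on S
  have hCS : ∑ e, ‖ψplus e‖ * ‖ψminus (z0, e)‖ ≤ Real.sqrt A * Real.sqrt M := by
    have h1 := Finset.sum_mul_sq_le_sq_mul_sq Finset.univ
      (fun e => ‖ψplus e‖) (fun e => ‖ψminus (z0, e)‖)
    have h2 : (0:ℝ) ≤ ∑ e, ‖ψplus e‖ * ‖ψminus (z0, e)‖ :=
      Finset.sum_nonneg fun _ _ => by positivity
    rw [← Real.sqrt_mul hA0]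
    exact (Real.le_sqrt h2 (by positivity)).mpr (by simpa [hA, hM] using h1)
  have hSlow : c ^ 2 * A + M - 2 * c * (Real.sqrt A * Real.sqrt M) ≤ S := by
    have pointwise : ∀ e, c ^ 2 * ‖ψplus e‖ ^ 2 + ‖ψminus (z0, e)‖ ^ 2
        - 2 * c * (‖ψplus e‖ * ‖ψminus (z0, e)‖) ≤ ‖ψ (z0, e)‖ ^ 2 := by
      intro e
      rw [hexpand z0 e]
      have habs : |((starRingEnd ℂ) (u e) * ψminus (z0, e)).re|
          ≤ c * ‖ψplus e‖ * ‖ψminus (z0, e)‖ := by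
        calc |((starRingEnd ℂ) (u e) * ψminus (z0, e)).re|
            ≤ ‖(starRingEnd ℂ) (u e) * ψminus (z0, e)‖ :=
              Complex.abs_re_le_norm _
          _ = c * ‖ψplus e‖ * ‖ψminus (z0, e)‖ := by
              rw [norm_mul, RCLike.norm_conj, hunorm e]
      have := (abs_le.mp habs).1
      linarith
    calc c ^ 2 * A + M - 2 * c * (Real.sqrt A * Real.sqrt M)
        ≤ c ^ 2 * A + M - 2 * c * ∑ e, ‖ψplus e‖ * ‖ψminus (z0, e)‖ := by
          nlinarith [hCS]
      _ = ∑ e, (c ^ 2 * ‖ψplus e‖ ^ 2 + ‖ψminus (z0, e)‖ ^ 2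
            - 2 * c * (‖ψplus e‖ * ‖ψminus (z0, e)‖)) := by
          rw [Finset.sum_sub_distrib, Finset.sum_add_distrib, ← Finset.mul_sum,
            ← Finset.mul_sum, hA, hM]
      _ ≤ S := Finset.sum_le_sum fun e _ => pointwise e
  -- final numeric argument
  rw [← hc2]
  set q : ℝ := Real.sqrt (p * (1 - p)) with hq
  have hq0 : 0 ≤ q := Real.sqrt_nonneg _
  have hq2 : q ^ 2 = p * (1 - p) := Real.sq_sqrt (by nlinarith)
  by_cases hT : c ^ 2 * p - 2 * c * q ≤ 0
  · linarith
  · push_neg at hT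
    -- then p > 4/5, in particular p ≥ 1/2
    have h1 : c * (2 * q) < c * (c * p) := by nlinarith only [hT]
    have h2 : 2 * q < c * p := lt_of_mul_lt_mul_left h1 hc0.le
    have h3 : 4 * (p * (1 - p)) < c ^ 2 * p ^ 2 := by
      nlinarith only [h2, hq0, hq2, hc0.le, hp0]
    have hphalf : 1 / 2 ≤ p := by
      nlinarith only [h3, hp0, hp1, hc1, hc0.le, sq_nonneg p,
        mul_nonneg hp0 (sub_nonneg.mpr hp1),
        mul_nonneg (mul_nonneg hp0 hp0) (sub_nonneg.mpr hc1),
        mul_nonneg (mul_nonneg hp0 hp0) (mul_nonneg hc0.le (sub_nonneg.mpr hc1))]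
    have e1 : A * M ≤ A * (1 - A) := mul_le_mul_of_nonneg_left hM_le hA0
    have e2 : 0 ≤ (A - p) * (A + p - 1) :=
      mul_nonneg (by linarith) (by linarith)
    have hAMle : A * M ≤ p * (1 - p) := by nlinarith only [e1, e2]
    have hAM : Real.sqrt A * Real.sqrt M ≤ q := by
      rw [← Real.sqrt_mul hA0, hq]
      exact Real.sqrt_le_sqrt hAMle
    have f1 : c ^ 2 * p ≤ c ^ 2 * A :=
      mul_le_mul_of_nonneg_left hplus (sq_nonneg c)
    have f2 : 2 * c * (Real.sqrt A * Real.sqrt M) ≤ 2 * c * q :=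
      mul_le_mul_of_nonneg_left hAM (by linarith)
    linarith only [hSlow, f1, f2, hM0]
end

section
/- Let U, O be unitaries, \Pi an orthogonal projection on a finite-dimensional Hilbert space, and |\phi_0\rangle a unit vector. Define |\tilde\psi_i\rangle = \Pi (UO(1-\Pi))^{i-1}|\phi_0\rangle and \epsilon_i = \|\Pi (UO)^{i-1} |\phi_0\rangle\|^2. Then \sum_{i=1}^{q} \|\tilde\psi_i\|^2 = 1 - \|(UO(1-\Pi))^q |\phi_0\rangle\|^2 \le 4 \sum_{i=1}^{q} \epsilon_i. -/
open scoped InnerProductSpace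

/-- The squared norms of the components fired off by the projection `Π` sum to the missed
mass `1 - ‖(UO(1-Π))^q φ₀‖²`, which is at most `4 ∑ ‖Π (UO)^i φ₀‖²` by the quantum union
bound. -/
theorem fired_components_bound
    {H : Type*} [NormedAddCommGroup H] [InnerProductSpace ℂ H] [FiniteDimensional ℂ H]
    (U O : H →ₗ[ℂ] H)
    (hU : ∀ x : H, ‖U x‖ = ‖x‖) (hUsurj : Function.Surjective U)
    (hO : ∀ x : H, ‖O x‖ = ‖x‖) (hOsurj : Function.Surjective O)
    (Pi : H →ₗ[ℂ] H)
    (hPiIdem : Pi ∘ₗ Pi = Pi) (hPiSa : ∀ x y : H, ⟪Pi x, y⟫_ℂ = ⟪x, Pi y⟫_ℂ)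
    (φ0 : H) (hφ0 : ‖φ0‖ = 1) (q : ℕ) (hq : 1 ≤ q)
    (A B : H →ₗ[ℂ] H)
    (hA : A = U ∘ₗ O) (hB : B = A ∘ₗ (LinearMap.id - Pi)) :
    (∑ i ∈ Finset.range q, ‖Pi ((B ^ i) φ0)‖ ^ 2 = 1 - ‖(B ^ q) φ0‖ ^ 2) ∧
    (∑ i ∈ Finset.range q, ‖Pi ((B ^ i) φ0)‖ ^ 2
        ≤ 4 * ∑ i ∈ Finset.range q, ‖Pi ((A ^ i) φ0)‖ ^ 2) := by
  have hPi2 : ∀ v : H, Pi (Pi v) = Pi v := fun v => LinearMap.congr_fun hPiIdem v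
  have horth : ∀ u v : H, ⟪Pi u, v - Pi v⟫_ℂ = 0 := by
    intro u v
    rw [hPiSa, map_sub, hPi2, sub_self, inner_zero_right]
  have hsplit : ∀ z d : H, ‖(d - Pi d) + Pi z‖ ^ 2 = ‖d - Pi d‖ ^ 2 + ‖Pi z‖ ^ 2 := by
    intro z d
    rw [@norm_add_sq ℂ]
    have h0 : ⟪d - Pi d, Pi z⟫_ℂ = 0 := by
      rw [← inner_conj_symm, horth z d, map_zero]
    rw [h0]
    simp
  have hpyth : ∀ v : H, ‖v‖ ^ 2 = ‖Pi v‖ ^ 2 + ‖v - Pi v‖ ^ 2 := by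
    intro v
    have h1 : ‖v‖ ^ 2 = ‖(v - Pi v) + Pi v‖ ^ 2 := by rw [sub_add_cancel]
    rw [h1, hsplit v v]; ring
  have hAn : ∀ x : H, ‖A x‖ = ‖x‖ := by
    intro x
    rw [hA, LinearMap.comp_apply, hU, hO]
  have hBstep : ∀ v : H, B v = A (v - Pi v) := by
    intro v
    rw [hB]
    simp [LinearMap.comp_apply, LinearMap.sub_apply]
  have hApow : ∀ i : ℕ, (A ^ (i + 1)) φ0 = A ((A ^ i) φ0) := by
    intro i
    rw [pow_succ']
    rfl
  have hBpow : ∀ i : ℕ, (B ^ (i + 1)) φ0 = B ((B ^ i) φ0) := by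
    intro i
    rw [pow_succ']
    rfl
  have hy : ∀ i : ℕ, ‖Pi ((B ^ i) φ0)‖ ^ 2 = ‖(B ^ i) φ0‖ ^ 2 - ‖(B ^ (i + 1)) φ0‖ ^ 2 := by
    intro i
    rw [hBpow, hBstep, hAn, hpyth ((B ^ i) φ0)]
    ring
  -- Part 1
  have part1 : ∑ i ∈ Finset.range q, ‖Pi ((B ^ i) φ0)‖ ^ 2 = 1 - ‖(B ^ q) φ0‖ ^ 2 := by
    have := Finset.sum_range_sub' (fun i => ‖(B ^ i) φ0‖ ^ 2) q
    calc ∑ i ∈ Finset.range q, ‖Pi ((B ^ i) φ0)‖ ^ 2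
        = ∑ i ∈ Finset.range q, (‖(B ^ i) φ0‖ ^ 2 - ‖(B ^ (i + 1)) φ0‖ ^ 2) :=
          Finset.sum_congr rfl (fun i _ => hy i)
      _ = ‖(B ^ 0) φ0‖ ^ 2 - ‖(B ^ q) φ0‖ ^ 2 := this
      _ = 1 - ‖(B ^ q) φ0‖ ^ 2 := by simp [hφ0]
  refine ⟨part1, ?_⟩
  -- Part 2
  set a : ℕ → ℝ := fun i => ‖Pi ((A ^ i) φ0)‖ with ha
  set b : ℕ → ℝ := fun i => ‖Pi ((B ^ i) φ0)‖ with hbdef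
  set m : ℕ → ℝ := fun i => max (b i - a i) 0 with hm
  set r : ℕ → ℝ := fun i => ‖(A ^ i) φ0 - (B ^ i) φ0‖ ^ 2 with hr
  have hr0 : r 0 = 0 := by simp [hr]
  have hrstep : ∀ i : ℕ, r (i + 1) ≤ r i + a i ^ 2 - m i ^ 2 := by
    intro i
    set z : H := (A ^ i) φ0 with hz
    set y : H := (B ^ i) φ0 with hy'
    set d : H := z - y with hd
    have key : (A ^ (i + 1)) φ0 - (B ^ (i + 1)) φ0 = A ((d - Pi d) + Pi z) := by
      rw [hApow, hBpow, hBstep, ← map_sub]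
      congr 1
      simp only [hd, map_sub]
      abel
    have h1 : r (i + 1) = ‖d - Pi d‖ ^ 2 + ‖Pi z‖ ^ 2 := by
      rw [hr]
      simp only
      rw [key, hAn, hsplit]
    have h2 : ‖d - Pi d‖ ^ 2 = r i - ‖Pi d‖ ^ 2 := by
      have := hpyth d
      rw [hr]
      simp only
      rw [← hd]
      linarith
    have h3 : m i ≤ ‖Pi d‖ := by
      rw [hm]
      simp only
      apply max_le
      · have : ‖Pi y‖ - ‖Pi z‖ ≤ ‖Pi z - Pi y‖ := by
          rw [norm_sub_rev]
          exact norm_sub_norm_le _ _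
        rw [hd, map_sub]
        simpa [ha, hbdef] using this
      · exact norm_nonneg _
    have h4 : m i ^ 2 ≤ ‖Pi d‖ ^ 2 := by
      apply pow_le_pow_left₀ (le_max_right _ _) h3
    linarith
  have hsumr : ∀ n : ℕ, r n + ∑ i ∈ Finset.range n, m i ^ 2 ≤ ∑ i ∈ Finset.range n, a i ^ 2 := by
    intro n
    induction n with
    | zero => simp [hr0]
    | succ k ih =>
      rw [Finset.sum_range_succ, Finset.sum_range_succ]
      have := hrstep k
      linarith
  have hmsum : ∑ i ∈ Finset.range q, m i ^ 2 ≤ ∑ i ∈ Finset.range q, a i ^ 2 := by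
    have := hsumr q
    have hrq : 0 ≤ r q := by rw [hr]; positivity
    linarith
  have hb2 : ∀ i : ℕ, b i ^ 2 ≤ 2 * a i ^ 2 + 2 * m i ^ 2 := by
    intro i
    have h1 : b i ≤ a i + m i := by
      show b i ≤ a i + max (b i - a i) 0
      linarith [le_max_left (b i - a i) (0:ℝ)]
    have hb0 : 0 ≤ b i := norm_nonneg _
    nlinarith [sq_nonneg (a i - m i)]
  calc ∑ i ∈ Finset.range q, ‖Pi ((B ^ i) φ0)‖ ^ 2
      = ∑ i ∈ Finset.range q, b i ^ 2 := rfl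
    _ ≤ ∑ i ∈ Finset.range q, (2 * a i ^ 2 + 2 * m i ^ 2) :=
        Finset.sum_le_sum (fun i _ => hb2 i)
    _ = 2 * ∑ i ∈ Finset.range q, a i ^ 2 + 2 * ∑ i ∈ Finset.range q, m i ^ 2 := by
        rw [Finset.sum_add_distrib, Finset.mul_sum, Finset.mul_sum]
    _ ≤ 4 * ∑ i ∈ Finset.range q, a i ^ 2 := by linarith
end

section
/- Let c > 0 be a constant and let k, l be integers with 2^{1/c} \le k \le 2^{2^l/(256 c)} and l \ge 14. Set N = c \cdot 2^l \cdot \log k, \mu = 2^{-l} k N, \gamma = 4 \cdot 2^{-l}, and \underline{\mu}' = 2^{-l} k [N - 1 - \gamma(1 + 4\cdot 2^l + \log(4\gamma/\log k)) - 4\sqrt{2^l \gamma N}]. Then \mu - \underline{\mu}' \le (3/4) k and the \delta defined by \delta = ((1 - 8\cdot 2^{-l})k - (\mu - \underline{\mu}'))/(2\mu) satisfies \delta \ge 1/(8 c \log k), and hence \delta^2 \mu \ge k / (64 c \log k). -/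
set_option maxHeartbeats 1600000 in
/-- Parameter-balancing estimates from the negligibility lemma: with
`N = c·2^l·log₂ k`, `μ = 2^{-l} k N`, `γ = 4·2^{-l}` and `μ'` the corrected mean,
one has `μ - μ' ≤ (3/4)k`, `δ ≥ 1/(8c log₂ k)` and `δ²μ ≥ k/(64 c log₂ k)`. -/
theorem parameter_balancing
    (c : ℝ) (hc : 0 < c) (k l : ℕ)
    (hk1 : (2 : ℝ) ^ (1 / c) ≤ (k : ℝ))
    (hk2 : (k : ℝ) ≤ (2 : ℝ) ^ ((2 : ℝ) ^ (l : ℕ) / (256 * c)))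
    (hl : 14 ≤ l)
    (N μ γ μ' δ : ℝ)
    (hN : N = c * 2 ^ l * Real.logb 2 k)
    (hμ : μ = ((2 : ℝ) ^ l)⁻¹ * k * N)
    (hγ : γ = 4 * ((2 : ℝ) ^ l)⁻¹)
    (hμ' : μ' = ((2 : ℝ) ^ l)⁻¹ * k *
      (N - 1 - γ * (1 + 4 * 2 ^ l + Real.logb 2 (4 * γ / Real.logb 2 k))
        - 4 * Real.sqrt (2 ^ l * γ * N)))
    (hδ : δ = ((1 - 8 * ((2 : ℝ) ^ l)⁻¹) * k - (μ - μ')) / (2 * μ)) :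
    μ - μ' ≤ 3 / 4 * k ∧
    1 / (8 * c * Real.logb 2 k) ≤ δ ∧
    (k : ℝ) / (64 * c * Real.logb 2 k) ≤ δ ^ 2 * μ := by
  set L : ℝ := (2 : ℝ) ^ l with hLdef
  have hLpos : 0 < L := by positivity
  have hL : (16384 : ℝ) ≤ L := by
    calc (16384 : ℝ) = 2 ^ (14 : ℕ) := by norm_num
    _ ≤ 2 ^ l := pow_le_pow_right₀ (by norm_num) hl
  -- k ≥ 2
  have hk2R : (2 : ℝ) ≤ (k : ℝ) := by
    have h1 : (1 : ℝ) < (2 : ℝ) ^ (1 / c) :=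
      (Real.one_lt_rpow_iff_of_pos (by norm_num)).mpr (Or.inl ⟨by norm_num, by positivity⟩)
    have : (1 : ℝ) < (k : ℝ) := lt_of_lt_of_le h1 hk1
    exact_mod_cast Nat.one_lt_cast.mp this
  have hkpos : (0 : ℝ) < (k : ℝ) := by linarith
  set G : ℝ := Real.logb 2 k with hGdef
  have hG1 : (1 : ℝ) ≤ G := by
    have := Real.logb_self_eq_one (b := 2) (by norm_num)
    rw [hGdef, ← this]
    exact Real.logb_le_logb_of_le (by norm_num) (by norm_num) hk2R
  have hGpos : 0 < G := by linarith
  -- log₂ k ≤ L / (256 c)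
  have hG2 : G ≤ L / (256 * c) := by
    have h1 : Real.logb 2 (k : ℝ) ≤ Real.logb 2 ((2 : ℝ) ^ ((2 : ℝ) ^ (l : ℕ) / (256 * c))) :=
      Real.logb_le_logb_of_le (by norm_num) hkpos hk2
    rwa [Real.logb_rpow (by norm_num) (by norm_num)] at h1
  clear_value G
  clear_value L
  -- bounds on N
  have hNpos : 0 < N := by rw [hN]; positivity
  have hNle : N ≤ L ^ 2 / 256 := by
    rw [hN]
    calc c * L * G ≤ c * L * (L / (256 * c)) := by
          apply mul_le_mul_of_nonneg_left hG2 (by positivity)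
    _ = L ^ 2 / 256 := by field_simp
  -- sqrt bounds
  have hsqrtN : Real.sqrt N ≤ L / 16 := by
    have h1 : N ≤ (L / 16) ^ 2 := by nlinarith
    calc Real.sqrt N ≤ Real.sqrt ((L / 16) ^ 2) := Real.sqrt_le_sqrt h1
    _ = L / 16 := Real.sqrt_sq (by positivity)
  have hγval : L * γ = 4 := by
    rw [hγ]
    field_simp
  have hsqrt4 : Real.sqrt (L * γ * N) = 2 * Real.sqrt N := by
    rw [hγval]
    rw [show (4 : ℝ) * N = 2 ^ 2 * N by norm_num, Real.sqrt_mul (by norm_num),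
      Real.sqrt_sq (by norm_num)]
  -- log term is nonpositive
  have hγpos : 0 < γ := by rw [hγ]; positivity
  have hlogterm : Real.logb 2 (4 * γ / G) ≤ 0 := by
    apply Real.logb_nonpos (by norm_num) (by positivity)
    rw [hγ]
    rw [div_le_one hGpos]
    have h16 : 4 * (4 * L⁻¹) = 16 / L := by field_simp; norm_num
    rw [h16]
    have : 16 / L ≤ 1 := by
      rw [div_le_one hLpos]; linarith
    linarith
  -- difference formula
  have hdiff : μ - μ' = L⁻¹ * k *
      (1 + γ * (1 + 4 * L + Real.logb 2 (4 * γ / G)) + 4 * Real.sqrt (L * γ * N)) := by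
    rw [hμ, hμ']; ring
  -- key bound: μ - μ' ≤ (3/4 - 8/L) k
  have hLinv : L⁻¹ ≤ 1 / 16384 := by
    rw [inv_le_comm₀ hLpos (by norm_num)]; linarith
  have hLinvpos : 0 < L⁻¹ := by positivity
  have hkey : μ - μ' ≤ (3 / 4 - 8 * L⁻¹) * k := by
    rw [hdiff, hsqrt4]
    have hγlt : γ * Real.logb 2 (4 * γ / G) ≤ 0 :=
      mul_nonpos_of_nonneg_of_nonpos (le_of_lt hγpos) hlogterm
    have hT : 1 + γ * (1 + 4 * L + Real.logb 2 (4 * γ / G)) + 4 * (2 * Real.sqrt N)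
        ≤ 17 + 4 * L⁻¹ + L / 2 := by
      have hexp : γ * (1 + 4 * L + Real.logb 2 (4 * γ / G))
          = 4 * L⁻¹ + 16 + γ * Real.logb 2 (4 * γ / G) := by
        rw [hγ]; field_simp; ring
      rw [hexp]
      linarith [hγlt, hsqrtN]
    have hTbound : L⁻¹ * (17 + 4 * L⁻¹ + L / 2) ≤ 3 / 4 - 8 * L⁻¹ := by
      have hrw : L⁻¹ * (17 + 4 * L⁻¹ + L / 2) = 17 * L⁻¹ + 4 * L⁻¹ ^ 2 + 1 / 2 := by
        field_simp
      rw [hrw]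
      nlinarith [hLinv, hLinvpos]
    calc L⁻¹ * k * (1 + γ * (1 + 4 * L + Real.logb 2 (4 * γ / G)) + 4 * (2 * Real.sqrt N))
        ≤ L⁻¹ * k * (17 + 4 * L⁻¹ + L / 2) := by
          apply mul_le_mul_of_nonneg_left hT (by positivity)
    _ = L⁻¹ * (17 + 4 * L⁻¹ + L / 2) * k := by ring
    _ ≤ (3 / 4 - 8 * L⁻¹) * k := mul_le_mul_of_nonneg_right hTbound (le_of_lt hkpos)
  have hfirst : μ - μ' ≤ 3 / 4 * k := by
    have h8 : 0 ≤ 8 * L⁻¹ * k := by positivity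
    have hr : (3 / 4 - 8 * L⁻¹) * k = 3 / 4 * k - 8 * L⁻¹ * k := by ring
    linarith [hkey]
  -- μ = k c G
  have hμeq : μ = k * c * G := by
    rw [hμ, hN]
    field_simp
  have hμpos : 0 < μ := by rw [hμeq]; positivity
  -- δ bound
  have hA : (k : ℝ) / 4 ≤ (1 - 8 * L⁻¹) * k - (μ - μ') := by
    have hr2 : (1 - 8 * L⁻¹) * k - (3 / 4 - 8 * L⁻¹) * k = (k : ℝ) / 4 := by ring
    linarith [hkey]
  have hδbound : 1 / (8 * c * G) ≤ δ := by
    rw [hδ, le_div_iff₀ (by positivity)]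
    have heq : 1 / (8 * c * G) * (2 * μ) = k / 4 := by
      rw [hμeq]; field_simp; ring
    rw [heq]; exact hA
  refine ⟨hfirst, hδbound, ?_⟩
  have hbpos : (0 : ℝ) < 1 / (8 * c * G) := by positivity
  have hsq : (1 / (8 * c * G)) ^ 2 ≤ δ ^ 2 := pow_le_pow_left₀ (le_of_lt hbpos) hδbound 2
  have heq2 : (1 / (8 * c * G)) ^ 2 * μ = (k : ℝ) / (64 * c * G) := by
    rw [hμeq]; field_simp; ring
  calc (k : ℝ) / (64 * c * G) = (1 / (8 * c * G)) ^ 2 * μ := heq2.symm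
  _ ≤ δ ^ 2 * μ := mul_le_mul_of_nonneg_right hsq (le_of_lt hμpos)
end
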